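/- Let d, t be positive integers and A a finite cyclic group of order divisible by lcm(d, t). Let γ_t be a character of A of order t and ρ_d the direct sum of all characters of A of order d. Define A_{d,t} = {q prime : v_q(d) = v_q(t) > 0}, S_{d,t} = { lcm(d,t) / ∏_{q_i ∈ A_{d,t}} q_i^{m_i} : 0 ≤ m_i ≤ v_{q_i}(t) }, Q_{q,k}(s) = (q−2)/(q−1) if v_q(s) = k and 1 otherwise, and α_{d,t,s} = (φ(d)/φ(lcm(d,t))) · ∏_{q_i ∈ A_{d,t}} Q_{q_i, v_{q_i}(t)}(s). Then γ_t ⊗ ρ_d = ⊕_{s ∈ S_{d,t}} α_{d,t,s} ρ_s, i.e. for each s ∈ S_{d,t} the product characters γ_t·χ with χ of order d include exactly α_{d,t,s}·φ(s) characters of order s, and no other orders occur. -/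

import Mathlib

set_option synthInstance.maxHeartbeats 1000000
set_option maxHeartbeats 1000000

/-- The set `S_{d,t}`: `s' ∈ S_{d,t}` iff `s' = lcm (d, t) / ∏_{qᵢ ∈ A_{d,t}} qᵢ ^ mᵢ`
for some exponents `0 ≤ mᵢ ≤ v_{qᵢ} t`, where
`A_{d,t} = {q prime : v_q d = v_q t > 0}`. -/
def memS (d t s' : ℕ) : Prop :=
  s' ∣ Nat.lcm d t ∧ ∀ q : ℕ, q.Prime →
    if d.factorization q = t.factorization q ∧ 0 < t.factorization q
    then (Nat.lcm d t).factorization q - t.factorization q ≤ s'.factorization q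
    else s'.factorization q = (Nat.lcm d t).factorization q

/-- The multiplicity
`α_{d,t,s} = (φ d / φ (lcm d t)) · ∏_{qᵢ ∈ A_{d,t}} Q_{qᵢ, v_{qᵢ} t} (s)`, where
`Q_{q,k} (s) = (q-2)/(q-1)` if `v_q s = k` and `1` otherwise. -/
def alphaC (d t s' : ℕ) : ℚ :=
  (Nat.totient d : ℚ) / (Nat.totient (Nat.lcm d t) : ℚ) *
    ∏ q ∈ t.primeFactors.filter (fun q => d.factorization q = t.factorization q),
      (if s'.factorization q = t.factorization q
       then ((q : ℚ) - 2) / ((q : ℚ) - 1) else 1)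

/-! ### Auxiliary lemmas -/

lemma ZMod.addOrderOf_dvd' {n : ℕ} (x : ZMod n) : addOrderOf x ∣ n := by
  apply addOrderOf_dvd_of_nsmul_eq_zero
  rw [nsmul_eq_mul]
  simp

lemma fact_le_of_dvd {a b : ℕ} (hb : b ≠ 0) (h : a ∣ b) (q : ℕ) :
    a.factorization q ≤ b.factorization q := by
  rcases eq_or_ne a 0 with rfl | ha
  · exact absurd (zero_dvd_iff.mp h) hb
  · exact Finsupp.le_def.mp ((Nat.factorization_le_iff_dvd ha hb).mpr h) q

lemma fact_lcm {a b : ℕ} (ha : a ≠ 0) (hb : b ≠ 0) (q : ℕ) :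
    (Nat.lcm a b).factorization q = max (a.factorization q) (b.factorization q) := by
  rw [Nat.factorization_lcm ha hb]; rfl

/-- Part 1 of the statement, in `ZMod n`. -/
lemma memS_of_orders {n : ℕ} [NeZero n] (g x : ZMod n) :
    memS (addOrderOf x) (addOrderOf g) (addOrderOf (g + x)) := by
  have hd : addOrderOf x ≠ 0 := (addOrderOf_pos x).ne'
  have ht : addOrderOf g ≠ 0 := (addOrderOf_pos g).ne'
  have hs : addOrderOf (g + x) ≠ 0 := (addOrderOf_pos _).ne'
  set d := addOrderOf x with hdd
  set t := addOrderOf g with htt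
  set s := addOrderOf (g + x) with hss
  have hlcm : Nat.lcm d t ≠ 0 := Nat.lcm_ne_zero hd ht
  have hsdvd : s ∣ Nat.lcm d t := by
    rw [Nat.lcm_comm]
    exact (AddCommute.all g x).addOrderOf_add_dvd_lcm
  refine ⟨hsdvd, fun q hq => ?_⟩
  have hx' : x = (g + x) + (-g) := by abel
  have hg' : g = (g + x) + (-x) := by abel
  have hddvd : d ∣ Nat.lcm s t := by
    rw [hdd, hx']
    calc addOrderOf ((g + x) + (-g)) ∣ Nat.lcm (addOrderOf (g + x)) (addOrderOf (-g)) :=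
          (AddCommute.all _ _).addOrderOf_add_dvd_lcm
      _ = Nat.lcm s t := by rw [addOrderOf_neg]
  have htdvd : t ∣ Nat.lcm s d := by
    rw [htt, hg']
    calc addOrderOf ((g + x) + (-x)) ∣ Nat.lcm (addOrderOf (g + x)) (addOrderOf (-x)) :=
          (AddCommute.all _ _).addOrderOf_add_dvd_lcm
      _ = Nat.lcm s d := by rw [addOrderOf_neg]
  have A := fact_le_of_dvd hlcm hsdvd q
  have B := fact_le_of_dvd (Nat.lcm_ne_zero hs ht) hddvd q
  have C := fact_le_of_dvd (Nat.lcm_ne_zero hs hd) htdvd q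
  rw [fact_lcm hd ht] at A
  rw [fact_lcm hs ht] at B
  rw [fact_lcm hs hd] at C
  rw [le_max_iff] at B C
  split
  · next h =>
    rw [fact_lcm hd ht, h.1]
    omega
  · next h =>
    rw [fact_lcm hd ht]
    rw [not_and_or] at h
    rcases le_total (d.factorization q) (t.factorization q) with h' | h'
    · rw [max_eq_right h'] at A ⊢
      rcases B with B | B <;> rcases C with C | C <;> omega
    · rw [max_eq_left h'] at A ⊢
      rcases B with B | B <;> rcases C with C | C <;> omega

lemma addOrderOf_add_eq_max {n : ℕ} [NeZero n] {q a b : ℕ} (hq : q.Prime) {g x : ZMod n}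
    (hg : addOrderOf g = q ^ a) (hx : addOrderOf x = q ^ b) (hab : a < b) :
    addOrderOf (g + x) = q ^ b := by
  have h1 : addOrderOf (g + x) ∣ q ^ b := by
    have := (AddCommute.all g x).addOrderOf_add_dvd_lcm
    rw [hg, hx] at this
    exact this.trans (Nat.lcm_dvd (pow_dvd_pow q hab.le) dvd_rfl)
  obtain ⟨j, hj, ho⟩ := (Nat.dvd_prime_pow hq).mp h1
  have h2 : q ^ b ∣ Nat.lcm (addOrderOf (g + x)) (q ^ a) := by
    have h := (AddCommute.all (g + x) (-g)).addOrderOf_add_dvd_lcm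
    rw [addOrderOf_neg, hg, show (g + x) + -g = x by abel, hx] at h
    exact h
  rw [ho] at h2
  have h3 : Nat.lcm (q ^ j) (q ^ a) ∣ q ^ max j a :=
    Nat.lcm_dvd (pow_dvd_pow q (le_max_left _ _)) (pow_dvd_pow q (le_max_right _ _))
  have h5 : b ≤ max j a := (Nat.pow_dvd_pow_iff_le_right hq.one_lt).mp (h2.trans h3)
  have : j = b := by omega
  rw [ho, this]

lemma card_addOrderOf_eq {n : ℕ} [NeZero n] {m : ℕ} (hm : m ∣ n) :
    Nat.card {x : ZMod n // addOrderOf x = m} = m.totient := by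
  classical
  rw [Nat.card_eq_fintype_card, Fintype.card_subtype]
  have : m ∣ Fintype.card (ZMod n) := by rwa [ZMod.card]
  exact IsAddCyclic.card_addOrderOf_eq_totient this

lemma card_addOrderOf_dvd {n : ℕ} [NeZero n] {m : ℕ} (hm : m ∣ n) (hm0 : 0 < m) :
    Nat.card {x : ZMod n // addOrderOf x ∣ m} = m := by
  classical
  rw [Nat.card_eq_fintype_card, Fintype.card_subtype]
  have key := Finset.card_eq_sum_card_fiberwise
    (f := fun x : ZMod n => addOrderOf x)
    (s := Finset.univ.filter fun x : ZMod n => addOrderOf x ∣ m) (t := m.divisors)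
    (fun x hx => by
      rw [Finset.mem_coe, Finset.mem_filter] at hx
      exact Nat.mem_divisors.mpr ⟨hx.2, hm0.ne'⟩)
  rw [key]
  have h1 : ∀ e ∈ m.divisors,
      ((Finset.univ.filter fun x : ZMod n => addOrderOf x ∣ m).filter
        (fun x => addOrderOf x = e)).card
      = (Finset.univ.filter fun x : ZMod n => addOrderOf x = e).card := by
    intro e he
    congr 1
    ext x
    simp only [Finset.mem_filter, Finset.mem_univ, true_and]
    exact ⟨fun h => h.2, fun h => ⟨h ▸ (Nat.mem_divisors.mp he).1, h⟩⟩
  rw [Finset.sum_congr rfl h1]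
  have h2 : ∀ e ∈ m.divisors,
      (Finset.univ.filter fun x : ZMod n => addOrderOf x = e).card = e.totient := by
    intro e he
    have : e ∣ Fintype.card (ZMod n) := by
      rw [ZMod.card]; exact (Nat.mem_divisors.mp he).1.trans hm
    exact IsAddCyclic.card_addOrderOf_eq_totient this
  rw [Finset.sum_congr rfl h2, Nat.sum_totient]

lemma lcm_pow_pow {q : ℕ} (b a : ℕ) : Nat.lcm (q ^ b) (q ^ a) = q ^ max b a := by
  rcases le_total b a with h | h
  · rw [max_eq_right h]
    exact Nat.dvd_antisymm (Nat.lcm_dvd (pow_dvd_pow q h) dvd_rfl) (Nat.dvd_lcm_right _ _)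
  · rw [max_eq_left h]
    exact Nat.dvd_antisymm (Nat.lcm_dvd dvd_rfl (pow_dvd_pow q h)) (Nat.dvd_lcm_left _ _)

lemma card_shift {n : ℕ} (g : ZMod n) (p : ZMod n → Prop) :
    Nat.card {x : ZMod n // p (g + x)} = Nat.card {z : ZMod n // p z} :=
  Nat.card_congr ((Equiv.addLeft g).subtypeEquiv (fun _ => Iff.rfl))

lemma nat_card_subtype {α : Type*} [Fintype α] (p : α → Prop) [DecidablePred p] :
    Nat.card {x // p x} = (Finset.univ.filter p).card := by
  rw [Nat.card_eq_fintype_card, Fintype.card_subtype]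

/-- The key counting statement over `ZMod n`. -/
def KeyProp (n : ℕ) : Prop :=
  ∀ (d t s : ℕ) (g : ZMod n), 0 < d → 0 < t → Nat.lcm d t ∣ n → addOrderOf g = t →
    memS d t s →
    (Nat.card {x : ZMod n // addOrderOf x = d ∧ addOrderOf (g + x) = s} : ℚ)
      = alphaC d t s * (Nat.totient s : ℚ)

lemma key_trivial {n : ℕ} (g : ZMod n) (hg : addOrderOf g = 1) {s : ℕ} (hs : memS 1 1 s) :
    (Nat.card {x : ZMod n // addOrderOf x = 1 ∧ addOrderOf (g + x) = s} : ℚ)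
      = alphaC 1 1 s * (Nat.totient s : ℚ) := by
  have hs1 : s = 1 := Nat.dvd_one.mp (by simpa using hs.1)
  subst hs1
  have hg0 : g = 0 := AddMonoid.addOrderOf_eq_one_iff.mp hg
  subst hg0
  have hiff : ∀ x : ZMod n, (addOrderOf x = 1 ∧ addOrderOf (0 + x) = 1) ↔ x = 0 := by
    intro x
    simp [AddMonoid.addOrderOf_eq_one_iff]
  rw [Nat.card_congr (Equiv.subtypeEquivRight hiff)]
  have hone : Nat.card {x : ZMod n // x = 0} = 1 := by
    haveI : Unique {x : ZMod n // x = 0} := ⟨⟨⟨0, rfl⟩⟩, by rintro ⟨y, rfl⟩; rfl⟩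
    exact Nat.card_unique
  rw [hone]
  simp [alphaC]

/-- The prime power case. -/
theorem keyprop_pp {q k : ℕ} (hq : q.Prime) (hk : 0 < k) (d t s : ℕ) (g : ZMod (q ^ k))
    (hd : 0 < d) (ht : 0 < t) (hl : Nat.lcm d t ∣ q ^ k) (hg : addOrderOf g = t)
    (hS : memS d t s) :
    (Nat.card {x : ZMod (q ^ k) // addOrderOf x = d ∧ addOrderOf (g + x) = s} : ℚ)
      = alphaC d t s * (Nat.totient s : ℚ) := by
  classical
  haveI : NeZero (q ^ k) := ⟨pow_ne_zero k hq.pos.ne'⟩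
  have fv : ∀ m : ℕ, ((q ^ m : ℕ)).factorization q = m := fun m => by
    rw [hq.factorization_pow, Finsupp.single_eq_same]
  have hd' := (Nat.dvd_lcm_left d t).trans hl
  have ht' := (Nat.dvd_lcm_right d t).trans hl
  obtain ⟨b, hb, rfl⟩ := (Nat.dvd_prime_pow hq).mp hd'
  obtain ⟨a, ha, rfl⟩ := (Nat.dvd_prime_pow hq).mp ht'
  have hsl : s ∣ q ^ max b a := by
    have := hS.1; rwa [lcm_pow_pow] at this
  obtain ⟨c, hc, rfl⟩ := (Nat.dvd_prime_pow hq).mp hsl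
  by_cases hab : b = a
  · subst hab
    by_cases hb0 : b = 0
    · subst hb0
      have hc0 : c = 0 := by simpa using hc
      subst hc0
      simp only [pow_zero] at hg hS ⊢
      exact key_trivial g hg hS
    · -- main case: a = b > 0
      have hb0' : 0 < b := Nat.pos_of_ne_zero hb0
      rw [max_self] at hc
      have hpf : ((q : ℕ) ^ b).primeFactors = {q} := by
        rw [Nat.primeFactors_pow _ hb0, Nat.Prime.primeFactors hq]
      have halpha : alphaC (q ^ b) (q ^ b) (q ^ c)
          = if c = b then ((q : ℚ) - 2) / ((q : ℚ) - 1) else 1 := by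
        rw [alphaC, Nat.lcm_self, div_self (by exact_mod_cast (Nat.totient_pos.mpr
          (pow_pos hq.pos b)).ne'), one_mul, hpf]
        rw [Finset.filter_singleton, if_pos rfl, Finset.prod_singleton, fv, fv]
      rcases Nat.lt_or_ge c b with hcb | hcb
      · -- c < b : count = φ(q^c)
        have hiff : ∀ x : ZMod (q ^ k),
            (addOrderOf x = q ^ b ∧ addOrderOf (g + x) = q ^ c)
              ↔ addOrderOf (g + x) = q ^ c := by
          intro x
          refine ⟨fun h => h.2, fun h => ⟨?_, h⟩⟩
          have hng : addOrderOf (-g) = q ^ b := by rw [addOrderOf_neg, hg]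
          have := addOrderOf_add_eq_max hq h hng hcb
          rwa [show g + x + -g = x from by abel] at this
        rw [Nat.card_congr (Equiv.subtypeEquivRight hiff)]
        rw [card_shift g (fun z => addOrderOf z = q ^ c)]
        rw [card_addOrderOf_eq (pow_dvd_pow q (le_trans (le_of_lt (lt_of_lt_of_le hcb hb)) le_rfl))]
        rw [halpha, if_neg hcb.ne, one_mul]
      · -- c = b : count = φ(q^b) - q^(b-1)
        have hcb' : c = b := le_antisymm hc hcb
        subst hcb'
        have hP12 : ∀ x : ZMod (q ^ k), addOrderOf x = q ^ c →
            addOrderOf (g + x) = q ^ c ∨ addOrderOf (g + x) ∣ q ^ (c - 1) := by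
          intro x hx
          have : addOrderOf (g + x) ∣ q ^ c := by
            have h := (AddCommute.all g x).addOrderOf_add_dvd_lcm
            rwa [hg, hx, Nat.lcm_self] at h
          obtain ⟨j, hj, hoj⟩ := (Nat.dvd_prime_pow hq).mp this
          rcases eq_or_lt_of_le hj with h | h
          · exact Or.inl (by rw [hoj, h])
          · exact Or.inr (hoj ▸ pow_dvd_pow q (by omega))
        have hP3 : ∀ x : ZMod (q ^ k), addOrderOf (g + x) ∣ q ^ (c - 1) →
            addOrderOf x = q ^ c := by
          intro x hx
          obtain ⟨j, hj, hoj⟩ := (Nat.dvd_prime_pow hq).mp hx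
          have hng : addOrderOf (-g) = q ^ c := by rw [addOrderOf_neg, hg]
          have := addOrderOf_add_eq_max hq hoj hng (by omega)
          rwa [show g + x + -g = x from by abel] at this
        have hdisj : ∀ x : ZMod (q ^ k),
            ¬(addOrderOf (g + x) = q ^ c ∧ addOrderOf (g + x) ∣ q ^ (c - 1)) := by
          rintro x ⟨h1, h2⟩
          rw [h1] at h2
          have := (Nat.pow_dvd_pow_iff_le_right hq.one_lt).mp h2
          omega
        have hunion : (Finset.univ.filter fun x : ZMod (q ^ k) => addOrderOf x = q ^ c)
            = (Finset.univ.filter fun x : ZMod (q ^ k) =>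
                addOrderOf x = q ^ c ∧ addOrderOf (g + x) = q ^ c)
              ∪ (Finset.univ.filter fun x : ZMod (q ^ k) => addOrderOf (g + x) ∣ q ^ (c - 1)) := by
          ext x
          simp only [Finset.mem_union, Finset.mem_filter, Finset.mem_univ, true_and]
          constructor
          · intro hx
            rcases hP12 x hx with h | h
            · exact Or.inl ⟨hx, h⟩
            · exact Or.inr h
          · rintro (⟨h, _⟩ | h)
            · exact h
            · exact hP3 x h
        have hdisj' : Disjoint
            (Finset.univ.filter fun x : ZMod (q ^ k) =>
                addOrderOf x = q ^ c ∧ addOrderOf (g + x) = q ^ c)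
            (Finset.univ.filter fun x : ZMod (q ^ k) => addOrderOf (g + x) ∣ q ^ (c - 1)) := by
          rw [Finset.disjoint_filter]
          rintro x _ ⟨_, h1⟩ h2
          exact hdisj x ⟨h1, h2⟩
        have hcards := congrArg Finset.card hunion
        rw [Finset.card_union_of_disjoint hdisj'] at hcards
        rw [← nat_card_subtype, ← nat_card_subtype, ← nat_card_subtype] at hcards
        rw [card_addOrderOf_eq (pow_dvd_pow q (show c ≤ k by omega))] at hcards
        rw [card_shift g (fun z => addOrderOf z ∣ q ^ (c - 1)),
          card_addOrderOf_dvd (pow_dvd_pow q (by omega)) (pow_pos hq.pos _)] at hcards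
        rw [halpha, if_pos rfl]
        have htot : ((q : ℕ) ^ c).totient = q ^ (c - 1) * (q - 1) :=
          Nat.totient_prime_pow hq hb0'
        have hQ1 : (1 : ℚ) ≤ (q : ℚ) := by exact_mod_cast hq.one_lt.le
        have hmain : (Nat.card {x : ZMod (q ^ k) //
            addOrderOf x = q ^ c ∧ addOrderOf (g + x) = q ^ c} : ℚ)
            = ((q : ℕ) ^ c).totient - (q : ℚ) ^ (c - 1) := by
          have hcast : ((Nat.card {x : ZMod (q ^ k) //
              addOrderOf x = q ^ c ∧ addOrderOf (g + x) = q ^ c} : ℕ) : ℚ)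
              + (q : ℚ) ^ (c - 1) = (((q : ℕ) ^ c).totient : ℚ) := by
            exact_mod_cast hcards.symm
          linarith
        have h2q : ((q : ℚ) - 1) ≠ 0 := by
          have : (2 : ℚ) ≤ (q : ℚ) := by exact_mod_cast hq.two_le
          linarith
        have e1 : ((q ^ (c - 1) * (q - 1) : ℕ) : ℚ) = (q : ℚ) ^ (c - 1) * ((q : ℚ) - 1) := by
          push_cast [hq.one_le]
          ring
        rw [hmain, htot, e1]
        field_simp
        ring
  · -- b ≠ a
    have hcond := hS.2 q hq
    simp only [lcm_pow_pow, fv] at hcond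
    rw [if_neg (fun h => hab h.1)] at hcond
    have hcmax : c = max b a := hcond
    have himp : ∀ x : ZMod (q ^ k), addOrderOf x = q ^ b → addOrderOf (g + x) = q ^ c := by
      intro x hx
      rcases Nat.lt_or_ge a b with h | h
      · have hmx := addOrderOf_add_eq_max hq hg hx h
        rw [hmx, hcmax, max_eq_left h.le]
      · have hba : b < a := by omega
        have hmx := addOrderOf_add_eq_max hq hx hg hba
        rw [add_comm g x, hmx, hcmax, max_eq_right hba.le]
    have hiff : ∀ x : ZMod (q ^ k),
        (addOrderOf x = q ^ b ∧ addOrderOf (g + x) = q ^ c) ↔ addOrderOf x = q ^ b :=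
      fun x => ⟨And.left, fun h => ⟨h, himp x h⟩⟩
    rw [Nat.card_congr (Equiv.subtypeEquivRight hiff), card_addOrderOf_eq hd']
    have hfe : ((q ^ a : ℕ).primeFactors.filter
        (fun p => ((q : ℕ) ^ b).factorization p = ((q : ℕ) ^ a).factorization p)) = ∅ := by
      rw [Finset.filter_eq_empty_iff]
      intro p hp
      have h1 := Nat.prime_of_mem_primeFactors hp
      have h2 := Nat.dvd_of_mem_primeFactors hp
      have hpq : p = q := (Nat.prime_dvd_prime_iff_eq h1 hq).mp (h1.dvd_of_dvd_pow h2)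
      subst hpq
      rw [fv, fv]
      exact fun h => hab h
    rw [alphaC, hfe, Finset.prod_empty, mul_one, lcm_pow_pow, hcmax]
    rw [div_mul_cancel₀]
    exact_mod_cast (Nat.totient_pos.mpr (pow_pos hq.pos _)).ne'
lemma gcd_mul_split {n₁ n₂ m : ℕ} (cop : n₁.Coprime n₂) (hm : m ∣ n₁ * n₂) :
    m.gcd n₁ * m.gcd n₂ = m := by
  apply Nat.dvd_antisymm
  · have c12 : (m.gcd n₁).Coprime (m.gcd n₂) :=
      Nat.Coprime.coprime_dvd_left (Nat.gcd_dvd_right m n₁)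
        (Nat.Coprime.coprime_dvd_right (Nat.gcd_dvd_right m n₂) cop)
    exact c12.lcm_eq_mul ▸ Nat.lcm_dvd (Nat.gcd_dvd_left m n₁) (Nat.gcd_dvd_left m n₂)
  · obtain ⟨y, z, hy, hz, rfl⟩ := Nat.dvd_mul.mp hm
    exact mul_dvd_mul (Nat.dvd_gcd (dvd_mul_right y z) hy)
      (Nat.dvd_gcd (dvd_mul_left z y) hz)

lemma split_unique {n₁ n₂ : ℕ} (cop : n₁.Coprime n₂) (hn₁ : n₁ ≠ 0) {a b a' b' : ℕ}
    (ha : a ∣ n₁) (hb : b ∣ n₂) (ha' : a' ∣ n₁) (hb' : b' ∣ n₂) (h : a * b = a' * b') :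
    a = a' ∧ b = b' := by
  have hcab : a.Coprime b' :=
    Nat.Coprime.coprime_dvd_left ha (Nat.Coprime.coprime_dvd_right hb' cop)
  have hca'b : a'.Coprime b :=
    Nat.Coprime.coprime_dvd_left ha' (Nat.Coprime.coprime_dvd_right hb cop)
  have h1 : a ∣ a' := (Nat.Coprime.dvd_of_dvd_mul_right hcab) (h ▸ dvd_mul_right a b)
  have h2 : a' ∣ a := (Nat.Coprime.dvd_of_dvd_mul_right hca'b) (h.symm ▸ dvd_mul_right a' b')
  have haa : a = a' := Nat.dvd_antisymm h1 h2
  subst haa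
  have ha0 : a ≠ 0 := fun h0 => hn₁ (by simpa [h0, zero_dvd_iff] using ha)
  exact ⟨rfl, Nat.eq_of_mul_eq_mul_left (Nat.pos_of_ne_zero ha0) h⟩

lemma fact_gcd_left {n₁ n₂ m q : ℕ} (cop : n₁.Coprime n₂) (hn₁ : n₁ ≠ 0) (hn₂ : n₂ ≠ 0)
    (hm : m ∣ n₁ * n₂) (hm0 : m ≠ 0) (hq : q.Prime) (hqn : q ∣ n₁) :
    (m.gcd n₁).factorization q = m.factorization q := by
  rw [Nat.factorization_gcd hm0 hn₁]
  have hqn₂ : ¬ q ∣ n₂ := fun h =>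
    hq.ne_one ((Nat.Coprime.coprime_dvd_left hqn cop).eq_one_of_dvd h)
  have h2 : m.factorization q ≤ n₁.factorization q := by
    have h3 := fact_le_of_dvd (mul_ne_zero hn₁ hn₂) hm q
    rw [Nat.factorization_mul hn₁ hn₂] at h3
    have hz : n₂.factorization q = 0 := Nat.factorization_eq_zero_of_not_dvd hqn₂
    simp only [Finsupp.add_apply, hz, add_zero] at h3
    exact h3
  rw [Finsupp.inf_apply]
  exact min_eq_left h2

lemma fact_gcd_zero {n₁ m q : ℕ} (hqn : ¬ q ∣ n₁) :
    (m.gcd n₁).factorization q = 0 :=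
  Nat.factorization_eq_zero_of_not_dvd (fun h => hqn (h.trans (Nat.gcd_dvd_right m n₁)))

lemma gcd_pos_of_pos {m n : ℕ} (hm : 0 < m) : 0 < m.gcd n := Nat.gcd_pos_of_pos_left n hm

lemma memS_split {n₁ n₂ d t s : ℕ} (cop : n₁.Coprime n₂) (hn₁ : n₁ ≠ 0) (hn₂ : n₂ ≠ 0)
    (hd : d ∣ n₁ * n₂) (ht : t ∣ n₁ * n₂) (hd0 : 0 < d) (ht0 : 0 < t) (hS : memS d t s) :
    memS (d.gcd n₁) (t.gcd n₁) (s.gcd n₁) := by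
  have hlcm0 : Nat.lcm d t ≠ 0 := Nat.lcm_ne_zero hd0.ne' ht0.ne'
  have hs : s ∣ n₁ * n₂ := hS.1.trans (Nat.lcm_dvd hd ht)
  have hs0 : s ≠ 0 := fun h0 => hlcm0 (Nat.eq_zero_of_zero_dvd (h0 ▸ hS.1))
  have hd10 : d.gcd n₁ ≠ 0 := (gcd_pos_of_pos hd0).ne'
  have ht10 : t.gcd n₁ ≠ 0 := (gcd_pos_of_pos ht0).ne'
  have hs10 : s.gcd n₁ ≠ 0 := (gcd_pos_of_pos (Nat.pos_of_ne_zero hs0)).ne'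
  constructor
  · rw [← Nat.factorization_le_iff_dvd hs10 (Nat.lcm_ne_zero hd10 ht10), Finsupp.le_def]
    intro q
    by_cases hqp : q.Prime
    · rw [fact_lcm hd10 ht10]
      by_cases hq1 : q ∣ n₁
      · rw [fact_gcd_left cop hn₁ hn₂ hs hs0 hqp hq1,
          fact_gcd_left cop hn₁ hn₂ hd hd0.ne' hqp hq1,
          fact_gcd_left cop hn₁ hn₂ ht ht0.ne' hqp hq1]
        have h4 := fact_le_of_dvd hlcm0 hS.1 q
        rwa [fact_lcm hd0.ne' ht0.ne'] at h4
      · rw [fact_gcd_zero hq1]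
        exact Nat.zero_le _
    · rw [Nat.factorization_eq_zero_of_not_prime _ hqp]
      exact Nat.zero_le _
  · intro q hq
    have hcond := hS.2 q hq
    by_cases hq1 : q ∣ n₁
    · rw [fact_lcm hd0.ne' ht0.ne'] at hcond
      rw [fact_gcd_left cop hn₁ hn₂ hd hd0.ne' hq hq1,
        fact_gcd_left cop hn₁ hn₂ ht ht0.ne' hq hq1,
        fact_gcd_left cop hn₁ hn₂ hs hs0 hq hq1,
        fact_lcm hd10 ht10,
        fact_gcd_left cop hn₁ hn₂ hd hd0.ne' hq hq1,
        fact_gcd_left cop hn₁ hn₂ ht ht0.ne' hq hq1]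
      exact hcond
    · rw [fact_gcd_zero hq1, fact_gcd_zero hq1, fact_gcd_zero hq1,
        fact_lcm hd10 ht10, fact_gcd_zero hq1, fact_gcd_zero hq1]
      simp

lemma coprime_of_dvd {n₁ n₂ a b : ℕ} (cop : n₁.Coprime n₂) (ha : a ∣ n₁) (hb : b ∣ n₂) :
    a.Coprime b :=
  Nat.Coprime.coprime_dvd_left ha (Nat.Coprime.coprime_dvd_right hb cop)

lemma alphaC_split {n₁ n₂ d t s : ℕ} (cop : n₁.Coprime n₂) (hn₁ : n₁ ≠ 0) (hn₂ : n₂ ≠ 0)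
    (hd : d ∣ n₁ * n₂) (ht : t ∣ n₁ * n₂) (hs : s ∣ n₁ * n₂)
    (hd0 : 0 < d) (ht0 : 0 < t) (hs0 : 0 < s) :
    alphaC d t s = alphaC (d.gcd n₁) (t.gcd n₁) (s.gcd n₁)
      * alphaC (d.gcd n₂) (t.gcd n₂) (s.gcd n₂) := by
  have hdn₂ : d ∣ n₂ * n₁ := (mul_comm n₁ n₂) ▸ hd
  have htn₂ : t ∣ n₂ * n₁ := (mul_comm n₁ n₂) ▸ ht
  have hsn₂ : s ∣ n₂ * n₁ := (mul_comm n₁ n₂) ▸ hs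
  have hd10 : d.gcd n₁ ≠ 0 := (Nat.gcd_pos_of_pos_left n₁ hd0).ne'
  have ht10 : t.gcd n₁ ≠ 0 := (Nat.gcd_pos_of_pos_left n₁ ht0).ne'
  have hd20 : d.gcd n₂ ≠ 0 := (Nat.gcd_pos_of_pos_left n₂ hd0).ne'
  have ht20 : t.gcd n₂ ≠ 0 := (Nat.gcd_pos_of_pos_left n₂ ht0).ne'
  have hL10 : Nat.lcm (d.gcd n₁) (t.gcd n₁) ≠ 0 := Nat.lcm_ne_zero hd10 ht10
  have hL20 : Nat.lcm (d.gcd n₂) (t.gcd n₂) ≠ 0 := Nat.lcm_ne_zero hd20 ht20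
  -- transfer of factorizations
  have Fd1 : ∀ q : ℕ, q.Prime → q ∣ n₁ → (d.gcd n₁).factorization q = d.factorization q :=
    fun q hq h1 => fact_gcd_left cop hn₁ hn₂ hd hd0.ne' hq h1
  have Ft1 : ∀ q : ℕ, q.Prime → q ∣ n₁ → (t.gcd n₁).factorization q = t.factorization q :=
    fun q hq h1 => fact_gcd_left cop hn₁ hn₂ ht ht0.ne' hq h1
  have Fs1 : ∀ q : ℕ, q.Prime → q ∣ n₁ → (s.gcd n₁).factorization q = s.factorization q :=
    fun q hq h1 => fact_gcd_left cop hn₁ hn₂ hs hs0.ne' hq h1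
  have Fd2 : ∀ q : ℕ, q.Prime → q ∣ n₂ → (d.gcd n₂).factorization q = d.factorization q :=
    fun q hq h1 => fact_gcd_left cop.symm hn₂ hn₁ hdn₂ hd0.ne' hq h1
  have Ft2 : ∀ q : ℕ, q.Prime → q ∣ n₂ → (t.gcd n₂).factorization q = t.factorization q :=
    fun q hq h1 => fact_gcd_left cop.symm hn₂ hn₁ htn₂ ht0.ne' hq h1
  have Fs2 : ∀ q : ℕ, q.Prime → q ∣ n₂ → (s.gcd n₂).factorization q = s.factorization q :=
    fun q hq h1 => fact_gcd_left cop.symm hn₂ hn₁ hsn₂ hs0.ne' hq h1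
  -- lcm splits
  have hlcm_eq : Nat.lcm d t
      = Nat.lcm (d.gcd n₁) (t.gcd n₁) * Nat.lcm (d.gcd n₂) (t.gcd n₂) := by
    refine Nat.eq_of_factorization_eq (Nat.lcm_ne_zero hd0.ne' ht0.ne')
      (mul_ne_zero hL10 hL20) (fun q => ?_)
    by_cases hqp : q.Prime
    · rw [Nat.factorization_mul hL10 hL20, Finsupp.add_apply,
        fact_lcm hd0.ne' ht0.ne', fact_lcm hd10 ht10, fact_lcm hd20 ht20]
      by_cases hq1 : q ∣ n₁
      · have hq2 : ¬ q ∣ n₂ := fun h =>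
          hqp.ne_one ((Nat.Coprime.coprime_dvd_left hq1 cop).eq_one_of_dvd h)
        rw [Fd1 q hqp hq1, Ft1 q hqp hq1, fact_gcd_zero hq2, fact_gcd_zero hq2]
        simp
      · by_cases hq2 : q ∣ n₂
        · rw [Fd2 q hqp hq2, Ft2 q hqp hq2, fact_gcd_zero hq1, fact_gcd_zero hq1]
          simp
        · have hdz : d.factorization q = 0 := by
            have := fact_le_of_dvd (mul_ne_zero hn₁ hn₂) hd q
            rw [Nat.factorization_mul hn₁ hn₂, Finsupp.add_apply,
              Nat.factorization_eq_zero_of_not_dvd hq1,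
              Nat.factorization_eq_zero_of_not_dvd hq2] at this
            omega
          have htz : t.factorization q = 0 := by
            have := fact_le_of_dvd (mul_ne_zero hn₁ hn₂) ht q
            rw [Nat.factorization_mul hn₁ hn₂, Finsupp.add_apply,
              Nat.factorization_eq_zero_of_not_dvd hq1,
              Nat.factorization_eq_zero_of_not_dvd hq2] at this
            omega
          rw [hdz, htz, fact_gcd_zero hq1, fact_gcd_zero hq1, fact_gcd_zero hq2,
            fact_gcd_zero hq2]
          simp
    · simp [Nat.factorization_eq_zero_of_not_prime _ hqp]
  -- totient splits
  have htot_lcm : ((Nat.lcm d t).totient : ℚ)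
      = ((Nat.lcm (d.gcd n₁) (t.gcd n₁)).totient : ℚ)
        * ((Nat.lcm (d.gcd n₂) (t.gcd n₂)).totient : ℚ) := by
    rw [hlcm_eq, Nat.totient_mul (coprime_of_dvd cop
      (Nat.lcm_dvd (Nat.gcd_dvd_right d n₁) (Nat.gcd_dvd_right t n₁))
      (Nat.lcm_dvd (Nat.gcd_dvd_right d n₂) (Nat.gcd_dvd_right t n₂)))]
    push_cast
    ring
  have htot_d : ((d : ℕ).totient : ℚ)
      = ((d.gcd n₁).totient : ℚ) * ((d.gcd n₂).totient : ℚ) := by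
    conv_lhs => rw [← gcd_mul_split cop hd]
    rw [Nat.totient_mul (coprime_of_dvd cop (Nat.gcd_dvd_right d n₁) (Nat.gcd_dvd_right d n₂))]
    push_cast
    ring
  -- primeFactors split
  have hpf : t.primeFactors = (t.gcd n₁).primeFactors ∪ (t.gcd n₂).primeFactors := by
    conv_lhs => rw [← gcd_mul_split cop ht]
    exact Nat.Coprime.primeFactors_mul
      (coprime_of_dvd cop (Nat.gcd_dvd_right t n₁) (Nat.gcd_dvd_right t n₂))
  have hdisj : Disjoint ((t.gcd n₁).primeFactors.filter
        (fun q => d.factorization q = t.factorization q))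
      ((t.gcd n₂).primeFactors.filter (fun q => d.factorization q = t.factorization q)) :=
    Finset.disjoint_filter_filter (Nat.Coprime.disjoint_primeFactors
      (coprime_of_dvd cop (Nat.gcd_dvd_right t n₁) (Nat.gcd_dvd_right t n₂)))
  have hprod : (∏ q ∈ t.primeFactors.filter (fun q => d.factorization q = t.factorization q),
        (if s.factorization q = t.factorization q then ((q : ℚ) - 2) / ((q : ℚ) - 1) else 1))
      = (∏ q ∈ (t.gcd n₁).primeFactors.filter
            (fun q => (d.gcd n₁).factorization q = (t.gcd n₁).factorization q),
          (if (s.gcd n₁).factorization q = (t.gcd n₁).factorization q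
           then ((q : ℚ) - 2) / ((q : ℚ) - 1) else 1))
        * (∏ q ∈ (t.gcd n₂).primeFactors.filter
            (fun q => (d.gcd n₂).factorization q = (t.gcd n₂).factorization q),
          (if (s.gcd n₂).factorization q = (t.gcd n₂).factorization q
           then ((q : ℚ) - 2) / ((q : ℚ) - 1) else 1)) := by
    have hflt1 : ((t.gcd n₁).primeFactors.filter
          (fun q => d.factorization q = t.factorization q))
        = ((t.gcd n₁).primeFactors.filter
          (fun q => (d.gcd n₁).factorization q = (t.gcd n₁).factorization q)) := by
      apply Finset.filter_congr
      intro q hq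
      have hqp := Nat.prime_of_mem_primeFactors hq
      have hq1 : q ∣ n₁ := (Nat.dvd_of_mem_primeFactors hq).trans (Nat.gcd_dvd_right t n₁)
      rw [Fd1 q hqp hq1, Ft1 q hqp hq1]
    have hflt2 : ((t.gcd n₂).primeFactors.filter
          (fun q => d.factorization q = t.factorization q))
        = ((t.gcd n₂).primeFactors.filter
          (fun q => (d.gcd n₂).factorization q = (t.gcd n₂).factorization q)) := by
      apply Finset.filter_congr
      intro q hq
      have hqp := Nat.prime_of_mem_primeFactors hq
      have hq2 : q ∣ n₂ := (Nat.dvd_of_mem_primeFactors hq).trans (Nat.gcd_dvd_right t n₂)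
      rw [Fd2 q hqp hq2, Ft2 q hqp hq2]
    rw [hpf, Finset.filter_union, Finset.prod_union hdisj, hflt1, hflt2]
    congr 1
    · refine Finset.prod_congr rfl (fun q hq => ?_)
      rw [Finset.mem_filter] at hq
      obtain ⟨hqmem, _⟩ := hq
      have hqp := Nat.prime_of_mem_primeFactors hqmem
      have hq1 : q ∣ n₁ := (Nat.dvd_of_mem_primeFactors hqmem).trans (Nat.gcd_dvd_right t n₁)
      rw [Fs1 q hqp hq1, Ft1 q hqp hq1]
    · refine Finset.prod_congr rfl (fun q hq => ?_)
      rw [Finset.mem_filter] at hq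
      obtain ⟨hqmem, _⟩ := hq
      have hqp := Nat.prime_of_mem_primeFactors hqmem
      have hq2 : q ∣ n₂ := (Nat.dvd_of_mem_primeFactors hqmem).trans (Nat.gcd_dvd_right t n₂)
      rw [Fs2 q hqp hq2, Ft2 q hqp hq2]
  rw [alphaC, alphaC, alphaC, htot_d, htot_lcm, hprod]
  ring

lemma keyprop_mul {n₁ n₂ : ℕ} (h₁ : 1 < n₁) (h₂ : 1 < n₂) (cop : n₁.Coprime n₂)
    (K₁ : KeyProp n₁) (K₂ : KeyProp n₂) : KeyProp (n₁ * n₂) := by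
  intro d t s g hd ht hl hg hS
  have hn₁ : n₁ ≠ 0 := by omega
  have hn₂ : n₂ ≠ 0 := by omega
  have hdn : d ∣ n₁ * n₂ := (Nat.dvd_lcm_left d t).trans hl
  have htn : t ∣ n₁ * n₂ := (Nat.dvd_lcm_right d t).trans hl
  have hsn : s ∣ n₁ * n₂ := hS.1.trans hl
  have hs0 : 0 < s := Nat.pos_of_ne_zero (fun h0 =>
    (Nat.lcm_ne_zero hd.ne' ht.ne') (Nat.eq_zero_of_zero_dvd (h0 ▸ hS.1)))
  set E := (ZMod.chineseRemainder cop).toAddEquiv with hE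
  have hord : ∀ x : ZMod (n₁ * n₂), addOrderOf (E x) = addOrderOf x := fun x =>
    AddEquiv.addOrderOf_eq E x
  have key_ord : ∀ (m : ℕ), m ∣ n₁ * n₂ → ∀ y : ZMod n₁ × ZMod n₂,
      (addOrderOf y = m ↔ (addOrderOf y.1 = m.gcd n₁ ∧ addOrderOf y.2 = m.gcd n₂)) := by
    intro m hm y
    have hcy : (addOrderOf y.1).Coprime (addOrderOf y.2) :=
      coprime_of_dvd cop (ZMod.addOrderOf_dvd' y.1) (ZMod.addOrderOf_dvd' y.2)
    rw [Prod.addOrderOf, Nat.Coprime.lcm_eq_mul hcy]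
    constructor
    · intro h
      exact split_unique cop hn₁ (ZMod.addOrderOf_dvd' y.1) (ZMod.addOrderOf_dvd' y.2)
        (Nat.gcd_dvd_right m n₁) (Nat.gcd_dvd_right m n₂) (h.trans (gcd_mul_split cop hm).symm)
    · rintro ⟨h1, h2⟩
      rw [h1, h2, gcd_mul_split cop hm]
  have hg12 := (key_ord t htn (E g)).mp ((hord g).trans hg)
  have hiff : ∀ x : ZMod (n₁ * n₂),
      (addOrderOf x = d ∧ addOrderOf (g + x) = s)
        ↔ ((addOrderOf (E x).1 = d.gcd n₁ ∧ addOrderOf ((E g).1 + (E x).1) = s.gcd n₁)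
          ∧ (addOrderOf (E x).2 = d.gcd n₂ ∧ addOrderOf ((E g).2 + (E x).2) = s.gcd n₂)) := by
    intro x
    rw [← hord x, ← hord (g + x), map_add, key_ord d hdn (E x), key_ord s hsn (E g + E x)]
    constructor
    · rintro ⟨⟨a1, a2⟩, b1, b2⟩; exact ⟨⟨a1, b1⟩, ⟨a2, b2⟩⟩
    · rintro ⟨⟨a1, b1⟩, a2, b2⟩; exact ⟨⟨a1, a2⟩, b1, b2⟩
  have eqv : {x : ZMod (n₁ * n₂) // addOrderOf x = d ∧ addOrderOf (g + x) = s}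
      ≃ {y : ZMod n₁ × ZMod n₂ //
          (addOrderOf y.1 = d.gcd n₁ ∧ addOrderOf ((E g).1 + y.1) = s.gcd n₁)
          ∧ (addOrderOf y.2 = d.gcd n₂ ∧ addOrderOf ((E g).2 + y.2) = s.gcd n₂)} :=
    Equiv.subtypeEquiv E.toEquiv hiff
  rw [Nat.card_congr (eqv.trans (Equiv.subtypeProdEquivProd
      (p := fun y1 : ZMod n₁ => addOrderOf y1 = d.gcd n₁ ∧ addOrderOf ((E g).1 + y1) = s.gcd n₁)
      (q := fun y2 : ZMod n₂ => addOrderOf y2 = d.gcd n₂ ∧ addOrderOf ((E g).2 + y2) = s.gcd n₂))),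
    Nat.card_prod]
  push_cast
  rw [K₁ (d.gcd n₁) (t.gcd n₁) (s.gcd n₁) (E g).1 (Nat.gcd_pos_of_pos_left n₁ hd)
      (Nat.gcd_pos_of_pos_left n₁ ht)
      (Nat.lcm_dvd (Nat.gcd_dvd_right d n₁) (Nat.gcd_dvd_right t n₁)) hg12.1
      (memS_split cop hn₁ hn₂ hdn htn hd ht hS),
    K₂ (d.gcd n₂) (t.gcd n₂) (s.gcd n₂) (E g).2 (Nat.gcd_pos_of_pos_left n₂ hd)
      (Nat.gcd_pos_of_pos_left n₂ ht)
      (Nat.lcm_dvd (Nat.gcd_dvd_right d n₂) (Nat.gcd_dvd_right t n₂)) hg12.2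
      (memS_split cop.symm hn₂ hn₁ ((mul_comm n₁ n₂) ▸ hdn) ((mul_comm n₁ n₂) ▸ htn) hd ht hS)]
  have hst : ((s.totient : ℕ) : ℚ) = ((s.gcd n₁).totient : ℚ) * ((s.gcd n₂).totient : ℚ) := by
    conv_lhs => rw [← gcd_mul_split cop hsn]
    rw [Nat.totient_mul (coprime_of_dvd cop (Nat.gcd_dvd_right s n₁) (Nat.gcd_dvd_right s n₂))]
    push_cast
    ring
  rw [alphaC_split cop hn₁ hn₂ hdn htn hsn hd ht hs0, hst]
  ring

lemma keyprop_all (n : ℕ) (hn : n ≠ 0) : KeyProp n := by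
  induction n using Nat.recOnPosPrimePosCoprime with
  | prime_pow p k hp hk => exact keyprop_pp hp hk
  | zero => exact absurd rfl hn
  | one =>
      intro d t s g hd ht hl hg hS
      have hd1 : d = 1 := Nat.dvd_one.mp ((Nat.dvd_lcm_left d t).trans hl)
      have ht1 : t = 1 := Nat.dvd_one.mp ((Nat.dvd_lcm_right d t).trans hl)
      subst hd1; subst ht1
      exact key_trivial g hg hS
  | coprime a b ha hb hab Ka Kb =>
      exact keyprop_mul ha hb hab (Ka (by omega)) (Kb (by omega))
theorem statement11 (A : Type) [Group A] [IsCyclic A] [Finite A]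
    (d t : ℕ) (hd : 0 < d) (ht : 0 < t) (hdvd : Nat.lcm d t ∣ Nat.card A)
    (γ : A →* ℂˣ) (hγ : orderOf γ = t) :
    (∀ χ : A →* ℂˣ, orderOf χ = d → memS d t (orderOf (γ * χ))) ∧
      ∀ s : ℕ, memS d t s →
        (Nat.card {χ : A →* ℂˣ // orderOf χ = d ∧ orderOf (γ * χ) = s} : ℚ) =
          alphaC d t s * (Nat.totient s : ℚ) := by
  classical
  letI : CommGroup A := IsCyclic.commGroup
  have hA : Nat.card A ≠ 0 := Nat.card_pos.ne'
  haveI : NeZero (Nat.card A) := ⟨hA⟩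
  obtain ⟨e⟩ := CommGroup.monoidHom_mulEquiv_of_hasEnoughRootsOfUnity A ℂ
  haveI : Finite (A →* ℂˣ) := Finite.of_equiv A e.symm.toEquiv
  haveI : IsCyclic (A →* ℂˣ) := isCyclic_of_surjective e.symm.toMonoidHom e.symm.surjective
  have hcard : Nat.card (A →* ℂˣ) = Nat.card (Multiplicative (ZMod (Nat.card A))) := by
    rw [Nat.card_congr e.toEquiv, Nat.card_congr Multiplicative.toAdd, Nat.card_zmod]
  let F : (A →* ℂˣ) ≃* Multiplicative (ZMod (Nat.card A)) := mulEquivOfCyclicCardEq hcard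
  have hordF : ∀ χ : A →* ℂˣ, addOrderOf (F χ).toAdd = orderOf χ := by
    intro χ
    rw [← orderOf_ofAdd_eq_addOrderOf]
    exact MulEquiv.orderOf_eq F χ
  set g : ZMod (Nat.card A) := (F γ).toAdd with hgdef
  have hg : addOrderOf g = t := by rw [hgdef, hordF, hγ]
  have hsum : ∀ χ : A →* ℂˣ, (F (γ * χ)).toAdd = g + (F χ).toAdd := by
    intro χ
    rw [map_mul]
    rfl
  constructor
  · intro χ hχ
    have := memS_of_orders g (F χ).toAdd
    rwa [hg, hordF, hχ, ← hsum, hordF] at this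
  · intro s hs
    have hEq : ∀ χ : A →* ℂˣ, (orderOf χ = d ∧ orderOf (γ * χ) = s)
        ↔ (addOrderOf ((F.toEquiv.trans Multiplicative.toAdd) χ) = d
          ∧ addOrderOf (g + (F.toEquiv.trans Multiplicative.toAdd) χ) = s) := by
      intro χ
      have h1 : ((F.toEquiv.trans Multiplicative.toAdd) χ) = (F χ).toAdd := rfl
      rw [h1, hordF, ← hsum, hordF]
    rw [Nat.card_congr (Equiv.subtypeEquiv
      (q := fun x : ZMod (Nat.card A) => addOrderOf x = d ∧ addOrderOf (g + x) = s)
      (F.toEquiv.trans Multiplicative.toAdd) hEq)]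
    exact keyprop_all (Nat.card A) hA d t s g hd ht hdvd hg hs
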